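/- For a finite group G and a prime p, the p-primary component of the Schur multiplier M(G) is isomorphic to a subgroup of the Schur multiplier M(P) of a Sylow p-subgroup P of G. -/

import Mathlib

open groupCohomology

/-- The Schur multiplier of a (finite) group `G`, realized as the second cohomology group
`H²(G, ℚ/ℤ)` with trivial action (which for finite `G` is isomorphic to `H₂(G,ℤ)`). -/
noncomputable abbrev SchurMultiplier (G : Type) [Group G] : Type :=
  H2 (Rep.trivial ℤ G (AddCircle (1 : ℚ)))

section aux0
private lemma cocycle_six {G : Type} [Group G] {A : Type} [AddCommGroup A]
    (F : G × G → A)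
    (hF : ∀ g h j : G, F (g * h, j) + F (g, h) = F (h, j) + F (g, h * j))
    (g₁ g₂ t t' t'' : G) (a b c : A)
    (haw : F (t * g₁ * t'⁻¹, t' * g₂ * t''⁻¹) = a - b + c) :
    F (g₁, g₂) =
      (a - (F (t' * g₂ * t''⁻¹, t'') - F (t', g₂)))
      - (b - (F (t * (g₁ * g₂) * t''⁻¹, t'') - F (t, g₁ * g₂)))
      + (c - (F (t * g₁ * t'⁻¹, t') - F (t, g₁))) := by
  have e1 := hF t g₁ g₂
  have e2 := hF (t * g₁ * t'⁻¹) t' g₂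
  have e3 := hF (t * g₁ * t'⁻¹) (t' * g₂ * t''⁻¹) t''
  rw [show t * g₁ * t'⁻¹ * t' = t * g₁ by group] at e2
  rw [show (t * g₁ * t'⁻¹) * (t' * g₂ * t''⁻¹) = t * (g₁ * g₂) * t''⁻¹ by group,
      show (t' * g₂ * t''⁻¹) * t'' = t' * g₂ by group] at e3
  rw [← sub_eq_zero]
  have comb : F (g₁, g₂) -
      ((a - (F (t' * g₂ * t''⁻¹, t'') - F (t', g₂)))
      - (b - (F (t * (g₁ * g₂) * t''⁻¹, t'') - F (t, g₁ * g₂)))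
      + (c - (F (t * g₁ * t'⁻¹, t') - F (t, g₁)))) =
      (F (t * g₁ * t'⁻¹, t' * g₂ * t''⁻¹) - (a - b + c))
      - ((F (t * (g₁ * g₂) * t''⁻¹, t'') + F (t * g₁ * t'⁻¹, t' * g₂ * t''⁻¹))
          - (F (t' * g₂ * t''⁻¹, t'') + F (t * g₁ * t'⁻¹, t' * g₂)))
      + ((F (t * g₁, g₂) + F (t * g₁ * t'⁻¹, t')) - (F (t', g₂) + F (t * g₁ * t'⁻¹, t' * g₂)))
      - ((F (t * g₁, g₂) + F (t, g₁)) - (F (g₁, g₂) + F (t, g₁ * g₂))) := by abel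
  rw [sub_eq_zero_of_eq haw, sub_eq_zero_of_eq e3, sub_eq_zero_of_eq e2,
      sub_eq_zero_of_eq e1] at comb
  simpa using comb

private lemma key_transfer {G : Type} [Group G] {A : Type} [AddCommGroup A]
    (H : Subgroup G) [Finite G] (F : G × G → A)
    (hF : ∀ g h j : G, F (g * h, j) + F (g, h) = F (h, j) + F (g, h * j))
    (w : G → A) (hw : ∀ a b : G, a ∈ H → b ∈ H → F (a, b) = w b - w (a * b) + w a) :
    ∃ z : G → A, ∀ g₁ g₂ : G,
      (Nat.card (Quotient (QuotientGroup.rightRel H))) • F (g₁, g₂) =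
        z g₂ - z (g₁ * g₂) + z g₁ := by
  classical
  set ι := Quotient (QuotientGroup.rightRel H) with hι
  letI : Fintype ι := Fintype.ofFinite _
  set act : G → ι → ι := fun g c => Quotient.mk _ (c.out * g) with hact
  have hmem : ∀ (c : ι) (g : G), c.out * g * ((act g c).out)⁻¹ ∈ H := by
    intro c g
    exact (QuotientGroup.rightRel_apply).1 (Quotient.exact (Quotient.out_eq (act g c)))
  have act_mul : ∀ (g₁ g₂ : G) (c : ι), act g₂ (act g₁ c) = act (g₁ * g₂) c := by
    intro g₁ g₂ c
    refine Quotient.sound (QuotientGroup.rightRel_apply.2 ?_)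
    have : c.out * (g₁ * g₂) * ((act g₁ c).out * g₂)⁻¹
        = c.out * g₁ * ((act g₁ c).out)⁻¹ := by group
    rw [this]
    exact hmem c g₁
  have act_one : ∀ c : ι, act 1 c = c := by
    intro c; rw [hact]; simp only [mul_one]; exact Quotient.out_eq c
  have act_bij : ∀ g : G, Function.Bijective (act g) := by
    intro g
    refine Function.bijective_iff_has_inverse.2 ⟨act g⁻¹, ?_, ?_⟩
    · intro c; rw [act_mul, mul_inv_cancel, act_one]
    · intro c; rw [act_mul, inv_mul_cancel, act_one]
  refine ⟨fun g => ∑ c : ι,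
      (w (c.out * g * ((act g c).out)⁻¹)
        - (F (c.out * g * ((act g c).out)⁻¹, (act g c).out) - F (c.out, g))), ?_⟩
  intro g₁ g₂
  have percl : ∀ c : ι, F (g₁, g₂) =
      (w ((act g₁ c).out * g₂ * ((act g₂ (act g₁ c)).out)⁻¹)
        - (F ((act g₁ c).out * g₂ * ((act g₂ (act g₁ c)).out)⁻¹, (act g₂ (act g₁ c)).out)
            - F ((act g₁ c).out, g₂)))
      - (w (c.out * (g₁ * g₂) * ((act (g₁ * g₂) c).out)⁻¹)
        - (F (c.out * (g₁ * g₂) * ((act (g₁ * g₂) c).out)⁻¹, (act (g₁ * g₂) c).out)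
            - F (c.out, g₁ * g₂)))
      + (w (c.out * g₁ * ((act g₁ c).out)⁻¹)
        - (F (c.out * g₁ * ((act g₁ c).out)⁻¹, (act g₁ c).out) - F (c.out, g₁))) := by
    intro c
    rw [act_mul g₁ g₂ c]
    refine cocycle_six F hF g₁ g₂ c.out ((act g₁ c).out) ((act (g₁ * g₂) c).out) _ _ _ ?_
    have m1 : c.out * g₁ * ((act g₁ c).out)⁻¹ ∈ H := hmem c g₁
    have m2 : (act g₁ c).out * g₂ * ((act (g₁ * g₂) c).out)⁻¹ ∈ H := by
      rw [← act_mul g₁ g₂ c]; exact hmem (act g₁ c) g₂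
    have := hw _ _ m1 m2
    rw [show (c.out * g₁ * ((act g₁ c).out)⁻¹) * ((act g₁ c).out * g₂ * ((act (g₁ * g₂) c).out)⁻¹)
        = c.out * (g₁ * g₂) * ((act (g₁ * g₂) c).out)⁻¹ by group] at this
    exact this
  calc (Nat.card ι) • F (g₁, g₂)
      = ∑ _c : ι, F (g₁, g₂) := by
        rw [Finset.sum_const, Finset.card_univ, Nat.card_eq_fintype_card]
    _ = ∑ c : ι,
        ((w ((act g₁ c).out * g₂ * ((act g₂ (act g₁ c)).out)⁻¹)
          - (F ((act g₁ c).out * g₂ * ((act g₂ (act g₁ c)).out)⁻¹, (act g₂ (act g₁ c)).out)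
              - F ((act g₁ c).out, g₂)))
        - (w (c.out * (g₁ * g₂) * ((act (g₁ * g₂) c).out)⁻¹)
          - (F (c.out * (g₁ * g₂) * ((act (g₁ * g₂) c).out)⁻¹, (act (g₁ * g₂) c).out)
              - F (c.out, g₁ * g₂)))
        + (w (c.out * g₁ * ((act g₁ c).out)⁻¹)
          - (F (c.out * g₁ * ((act g₁ c).out)⁻¹, (act g₁ c).out) - F (c.out, g₁)))) :=
        Finset.sum_congr rfl (fun c _ => percl c)
    _ = _ := by
        rw [Finset.sum_add_distrib, Finset.sum_sub_distrib]
        congr 2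
        exact Fintype.sum_bijective (act g₁) (act_bij g₁) _ _ (fun c => rfl)


section aux
variable {G : Type} [Group G] (H : Subgroup G)

lemma mem_coboundaries₂_iff' {G : Type} [Group G] (f : G × G → AddCircle (1 : ℚ)) :
    f ∈ coboundaries₂ (Rep.trivial ℤ G (AddCircle (1 : ℚ))) ↔
      ∃ x : G → AddCircle (1 : ℚ), ∀ g h : G,
        (Rep.trivial ℤ G (AddCircle (1 : ℚ))).ρ g (x h) - x (g * h) + x g = f (g, h) := by
  simp only [coboundaries₂, LinearMap.mem_range, funext_iff, Prod.forall]
  rfl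

noncomputable def resCocycle :
    cocycles₂ (Rep.trivial ℤ G (AddCircle (1 : ℚ))) →ₗ[ℤ]
      cocycles₂ (Rep.trivial ℤ H (AddCircle (1 : ℚ))) where
  toFun F := ⟨fun x => F.1 (x.1, x.2), by
    rw [mem_cocycles₂_iff]
    intro g h j
    have := (mem_cocycles₂_iff F.1).1 F.2 g h j
    simpa using this⟩
  map_add' F₁ F₂ := rfl
  map_smul' r F := rfl

lemma resCocycle_coboundary (F : cocycles₂ (Rep.trivial ℤ G (AddCircle (1 : ℚ))))
    (hF : ⇑F ∈ coboundaries₂ (Rep.trivial ℤ G (AddCircle (1 : ℚ)))) :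
    ⇑(resCocycle H F) ∈ coboundaries₂ (Rep.trivial ℤ H (AddCircle (1 : ℚ))) := by
  obtain ⟨x, hx⟩ := (mem_coboundaries₂_iff' _).1 hF
  exact (mem_coboundaries₂_iff' _).2 ⟨fun h => x h, fun g h => by have := hx g h; simp at this ⊢; exact this⟩

noncomputable def resH2 : SchurMultiplier G →ₗ[ℤ] SchurMultiplier H :=
  (map H.subtype (CategoryTheory.CategoryStruct.id (Rep.trivial ℤ H (AddCircle (1 : ℚ)))) 2).hom

private lemma endgame [Finite G] (p : ℕ) [Fact p.Prime] (hp : ¬ p ∣ H.index)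
    (a : AddCommGroup.primaryComponent (SchurMultiplier G) p)
    (ha : resH2 H a.1 = 0) : a = 0 := by
  -- cocycle representative
  obtain ⟨F, hF⟩ := (ModuleCat.epi_iff_surjective (H2π (Rep.trivial ℤ G (AddCircle (1 : ℚ))))).1
    inferInstance a.1
  have hres : ⇑(resCocycle H F) ∈ coboundaries₂ (Rep.trivial ℤ H (AddCircle (1 : ℚ))) := by
    rw [← H2π_eq_zero_iff]
    have : resH2 H (H2π _ F) = H2π _ (resCocycle H F) := by
      have := congrArg (fun f => ModuleCat.Hom.hom f F)
        (H2π_comp_map H.subtype (CategoryTheory.CategoryStruct.id (Rep.trivial ℤ H (AddCircle (1 : ℚ)))))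
      exact this
    rw [← this, hF, ha]
  obtain ⟨x, hx⟩ := (mem_coboundaries₂_iff' _).1 hres
  -- total function w
  classical
  set w : G → AddCircle (1 : ℚ) := fun g => if hg : g ∈ H then x ⟨g, hg⟩ else 0 with hwdef
  have hw : ∀ a b : G, a ∈ H → b ∈ H →
      F.1 (a, b) = w b - w (a * b) + w a := by
    intro a b haH hbH
    have h2 := hx ⟨a, haH⟩ ⟨b, hbH⟩
    simp only [Rep.trivial_ρ_apply, MulMemClass.mk_mul_mk] at h2
    simp only [hwdef, dif_pos haH, dif_pos hbH, dif_pos (mul_mem haH hbH)]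
    exact h2.symm
  -- plain cocycle property
  have hF' : ∀ g h j : G, F.1 (g * h, j) + F.1 (g, h) = F.1 (h, j) + F.1 (g, h * j) := by
    intro g h j
    have := (mem_cocycles₂_iff F.1).1 F.2 g h j
    simpa using this
  obtain ⟨z, hz⟩ := key_transfer H F.1 hF' w hw
  set n := Nat.card (Quotient (QuotientGroup.rightRel H)) with hndef
  have hnF : ⇑(n • F) ∈ coboundaries₂ (Rep.trivial ℤ G (AddCircle (1 : ℚ))) := by
    refine (mem_coboundaries₂_iff' _).2 ⟨z, fun g h => ?_⟩
    simp only [Rep.trivial_ρ_apply]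
    have : ((n • F : cocycles₂ _) : G × G → AddCircle (1 : ℚ)) (g, h) = n • (F.1 (g, h)) := rfl
    rw [this]
    exact (hz g h).symm
  have hsmul : n • a.1 = 0 := by
    rw [← hF]
    rw [← map_nsmul]
    exact (H2π_eq_zero_iff _).2 hnF
  have hdvd : addOrderOf a.1 ∣ n := addOrderOf_dvd_of_nsmul_eq_zero hsmul
  obtain ⟨k, -, hk⟩ := (Nat.dvd_prime_pow (Fact.out : p.Prime)).1
    (addOrderOf_dvd_of_nsmul_eq_zero a.2.choose_spec)
  have hpn : ¬ p ∣ n := by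
    rw [hndef, Nat.card_congr (QuotientGroup.quotientRightRelEquivQuotientLeftRel H)]
    exact hp
  have hk0 : k = 0 := by
    by_contra hk0
    exact hpn (dvd_trans (dvd_pow_self p hk0) (hk ▸ hdvd))
  have : addOrderOf a.1 = 1 := by rw [hk, hk0, pow_zero]
  have ha0 : a.1 = 0 := AddMonoid.addOrderOf_eq_one_iff.1 this
  exact Subtype.ext ha0


end aux


/-- For a finite group `G` and a prime `p`, the `p`-primary component of the Schur
multiplier `M(G)` is isomorphic to a subgroup of the Schur multiplier `M(P)` of a
Sylow `p`-subgroup `P` of `G`. -/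
theorem schurMultiplier_primaryComponent_embeds_in_sylow
    (G : Type) [Group G] [Finite G] (p : ℕ) [Fact p.Prime] (P : Sylow p G) :
    ∃ f : AddCommGroup.primaryComponent (SchurMultiplier G) p →+ SchurMultiplier P,
      Function.Injective f := by
  refine ⟨((resH2 (P : Subgroup G)).toAddMonoidHom).comp (AddSubgroup.subtype _), ?_⟩
  rw [injective_iff_map_eq_zero]
  intro a ha
  exact endgame (P : Subgroup G) p (Sylow.not_dvd_index P) a ha


end aux0
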